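/- arXiv:2410.04846 — 4 statements merged into one kernel-verified Lean document; each statement's English description precedes it below -/
import Mathlib

section
/- For j ∈ ℤ let ψ_j(x,y) = e^{πi x y 2^{-2j}} χ^H(x) χ^H(y), where χ^H is the Haar wavelet. Then the family {D_{2^j} (T^t_{(k,l)})^{2^{-2j}} ψ_j : k, l, j ∈ ℤ} is an orthonormal system in L²(ℝ²): ⟨D_{2^j}(T^t_{(k,l)})^{2^{-2j}} ψ_j, D_{2^{j'}}(T^t_{(k',l')})^{2^{-2j'}} ψ_{j'}⟩ equals 1 if (j,k,l) = (j',k',l') and 0 otherwise. -/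
open MeasureTheory Complex

noncomputable section

/-- The `λ`-twisted translation `(T^t_{(k,l)})^λ f (x,y) = e^{πiλ(xl - yk)} f(x-k, y-l)`. -/
def twistedTranslate (lam : ℝ) (k l : ℤ) (f : ℝ × ℝ → ℂ) : ℝ × ℝ → ℂ :=
  fun p => Complex.exp ((↑(Real.pi * lam * (p.1 * l - p.2 * k)) : ℂ) * Complex.I) *
    f (p.1 - k, p.2 - l)

/-- The dilation `D_a f (x,y) = a f(ax, ay)`. -/
def dilate (a : ℝ) (f : ℝ × ℝ → ℂ) : ℝ × ℝ → ℂ :=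
  fun p => (a : ℂ) * f (a * p.1, a * p.2)

/-- The kernel `K^λ_g(ξ,η) = ∫_ℝ g(x, η-ξ) e^{πiλx(η+ξ)} dx` of the Weyl transform `W_λ(g)`. -/
def weylKernel (lam : ℝ) (g : ℝ × ℝ → ℂ) (ξ η : ℝ) : ℂ :=
  ∫ x : ℝ, g (x, η - ξ) * Complex.exp ((↑(Real.pi * lam * x * (η + ξ)) : ℂ) * Complex.I)

/-- The Haar wavelet on `ℝ`. -/
def haarWavelet (x : ℝ) : ℂ :=
  if 0 ≤ x ∧ x ≤ 1 / 2 then 1 else if 1 / 2 < x ∧ x ≤ 1 then -1 else 0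

/-- `ψ_j(x,y) = e^{πixy2^{-2j}} χ^H(x) χ^H(y)`. -/
def psiHaar (j : ℤ) : ℝ × ℝ → ℂ :=
  fun p => Complex.exp ((↑(Real.pi * p.1 * p.2 * (2 : ℝ) ^ (-(2 * j))) : ℂ) * Complex.I) *
    haarWavelet p.1 * haarWavelet p.2

lemma haar_conj (x : ℝ) : (starRingEnd ℂ) (haarWavelet x) = haarWavelet x := by
  unfold haarWavelet; split_ifs <;> simp

lemma measurable_haar : Measurable haarWavelet := by
  unfold haarWavelet
  refine Measurable.ite ?_ measurable_const (Measurable.ite ?_ measurable_const measurable_const)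
  · simp only [Set.setOf_and]
    exact (measurableSet_le measurable_const measurable_id).inter
      (measurableSet_le measurable_id measurable_const)
  · simp only [Set.setOf_and]
    exact (measurableSet_lt measurable_const measurable_id).inter
      (measurableSet_le measurable_id measurable_const)

lemma norm_haar_le (x : ℝ) : ‖haarWavelet x‖ ≤ 1 := by
  unfold haarWavelet; split_ifs <;> simp

lemma haar_eq : haarWavelet = fun x =>
    Set.indicator (Set.Icc (0:ℝ) (1/2)) (fun _ => (1:ℂ)) x
      - Set.indicator (Set.Ioc (1/2:ℝ) 1) (fun _ => (1:ℂ)) x := by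
  funext x
  simp only [haarWavelet, Set.indicator_apply, Set.mem_Icc, Set.mem_Ioc]
  split_ifs with h1 h2 <;> first | linarith [h1.1, h1.2, h2.1, h2.2] | norm_num

lemma haar_ae : haarWavelet =ᵐ[volume] fun x =>
    Set.indicator (Set.Ioc (0:ℝ) (1/2)) (fun _ => (1:ℂ)) x
      - Set.indicator (Set.Ioc (1/2:ℝ) 1) (fun _ => (1:ℂ)) x := by
  rw [haar_eq]
  have h1 : (Set.Icc (0:ℝ) (1/2)).indicator (fun _ => (1:ℂ))
      =ᵐ[volume] (Set.Ioc (0:ℝ) (1/2)).indicator (fun _ => (1:ℂ)) :=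
    indicator_ae_eq_of_ae_eq_set (Ioc_ae_eq_Icc).symm
  exact h1.sub (Filter.EventuallyEq.refl _ _)

lemma integrable_ind (s : Set ℝ) (hs : MeasurableSet s) (hfin : volume s ≠ ⊤) :
    Integrable (s.indicator (fun _ => (1:ℂ))) :=
  (integrable_indicator_iff hs).mpr (integrableOn_const hfin)

lemma integrable_haar_ind (α β : ℝ) :
    Integrable (fun v => haarWavelet v * (Set.Ioc α β).indicator (fun _ => (1:ℂ)) v) := by
  have h : (fun v => haarWavelet v * (Set.Ioc α β).indicator (fun _ => (1:ℂ)) v)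
      = (Set.Ioc α β).indicator haarWavelet := by
    funext v
    by_cases hv : v ∈ Set.Ioc α β <;> simp [Set.indicator_apply, hv]
  rw [h, integrable_indicator_iff measurableSet_Ioc]
  exact Measure.integrableOn_of_bounded measure_Ioc_lt_top.ne
    measurable_haar.aestronglyMeasurable (Filter.Eventually.of_forall norm_haar_le)

lemma ind_mul_ind (s t : Set ℝ) (v : ℝ) :
    s.indicator (fun _ => (1:ℂ)) v * t.indicator (fun _ => (1:ℂ)) v
      = (s ∩ t).indicator (fun _ => (1:ℂ)) v := by
  by_cases hs : v ∈ s <;> by_cases ht : v ∈ t <;>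
    simp [Set.indicator_apply, hs, ht, Set.mem_inter_iff]

lemma haar_int_Ioc (a b : ℝ) (ha : a ≤ 0 ∨ 1 ≤ a) (hb : b ≤ 0 ∨ 1 ≤ b) :
    ∫ v : ℝ, haarWavelet v * (Set.Ioc a b).indicator (fun _ => (1:ℂ)) v = 0 := by
  have hcong : (fun v => haarWavelet v * (Set.Ioc a b).indicator (fun _ => (1:ℂ)) v)
      =ᵐ[volume] fun v =>
        (Set.Ioc ((0:ℝ) ⊔ a) ((1/2:ℝ) ⊓ b)).indicator (fun _ => (1:ℂ)) v
          - (Set.Ioc ((1/2:ℝ) ⊔ a) ((1:ℝ) ⊓ b)).indicator (fun _ => (1:ℂ)) v := by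
    filter_upwards [haar_ae] with v hv
    rw [hv, sub_mul, ind_mul_ind, ind_mul_ind, Set.Ioc_inter_Ioc, Set.Ioc_inter_Ioc]
  rw [integral_congr_ae hcong,
    integral_sub (integrable_ind _ measurableSet_Ioc measure_Ioc_lt_top.ne)
      (integrable_ind _ measurableSet_Ioc measure_Ioc_lt_top.ne),
    integral_indicator_const _ measurableSet_Ioc, integral_indicator_const _ measurableSet_Ioc]
  have hv : volume (Set.Ioc ((0:ℝ) ⊔ a) ((1/2:ℝ) ⊓ b))
      = volume (Set.Ioc ((1/2:ℝ) ⊔ a) ((1:ℝ) ⊓ b)) := by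
    rw [Real.volume_Ioc, Real.volume_Ioc]
    rcases ha with ha | ha <;> rcases hb with hb | hb
    · rw [ENNReal.ofReal_of_nonpos, ENNReal.ofReal_of_nonpos]
      · have h1 : (1:ℝ) ⊓ b ≤ b := inf_le_right
        have h2 : (1/2:ℝ) ≤ (1/2:ℝ) ⊔ a := le_sup_left
        linarith
      · have h1 : (1/2:ℝ) ⊓ b ≤ b := inf_le_right
        have h2 : (0:ℝ) ≤ (0:ℝ) ⊔ a := le_sup_left
        linarith
    · rw [sup_eq_left.mpr ha, sup_eq_left.mpr (by linarith : a ≤ (1/2:ℝ)),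
        inf_eq_left.mpr (by linarith : (1/2:ℝ) ≤ b), inf_eq_left.mpr hb]
      norm_num
    · rw [sup_eq_right.mpr (by linarith : (0:ℝ) ≤ a), sup_eq_right.mpr (by linarith : (1/2:ℝ) ≤ a),
        inf_eq_right.mpr (by linarith : b ≤ (1/2:ℝ)), inf_eq_right.mpr (by linarith : b ≤ (1:ℝ))]
    · rw [ENNReal.ofReal_of_nonpos, ENNReal.ofReal_of_nonpos]
      · have h1 : (1:ℝ) ⊓ b ≤ 1 := inf_le_left
        have h2 : a ≤ (1/2:ℝ) ⊔ a := le_sup_right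
        linarith
      · have h1 : (1/2:ℝ) ⊓ b ≤ 1/2 := inf_le_left
        have h2 : a ≤ (0:ℝ) ⊔ a := le_sup_right
        linarith
  rw [measureReal_def, measureReal_def, hv, sub_self]

lemma haar_sq : ∫ u : ℝ, haarWavelet u * haarWavelet u = 1 := by
  have h : ∀ u : ℝ, haarWavelet u * haarWavelet u
      = (Set.Icc (0:ℝ) 1).indicator (fun _ => (1:ℂ)) u := by
    intro u
    by_cases p : 0 ≤ u ∧ u ≤ 1/2
    · rw [haarWavelet, if_pos p, Set.indicator_of_mem (Set.mem_Icc.mpr ⟨p.1, by linarith [p.2]⟩)]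
      norm_num
    · by_cases q : 1/2 < u ∧ u ≤ 1
      · rw [haarWavelet, if_neg p, if_pos q, Set.indicator_of_mem (Set.mem_Icc.mpr ⟨by linarith [q.1], q.2⟩)]
        norm_num
      · rw [haarWavelet, if_neg p, if_neg q, Set.indicator_of_notMem]
        · norm_num
        · intro hm
          rw [Set.mem_Icc] at hm
          have h2 : ¬ u ≤ 1/2 := fun hle => p ⟨hm.1, hle⟩
          exact q ⟨not_le.mp h2, hm.2⟩
  rw [integral_congr_ae (Filter.Eventually.of_forall h),
    integral_indicator_const _ measurableSet_Icc]
  simp [Real.volume_Icc]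

lemma haar_pos_of_ne_zero {u : ℝ} (h0 : u ≠ 0) (h1 : u ≠ 1) (h : haarWavelet u ≠ 0) :
    0 < u ∧ u < 1 := by
  unfold haarWavelet at h
  split_ifs at h with p q
  · exact ⟨lt_of_le_of_ne p.1 (Ne.symm h0), lt_of_le_of_ne (by linarith [p.2]) h1⟩
  · exact ⟨by linarith [q.1], lt_of_le_of_ne q.2 h1⟩
  · exact absurd rfl h

lemma haar_mul_shift (d : ℤ) (hd : d ≠ 0) :
    ∫ u : ℝ, haarWavelet u * haarWavelet (u - (d:ℝ)) = 0 := by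
  apply integral_eq_zero_of_ae
  rw [Filter.EventuallyEq, ae_iff]
  refine measure_mono_null (fun u hu => ?_)
    ((Set.toFinite ({0, 1, (d:ℝ), (d:ℝ)+1} : Set ℝ)).measure_zero _)
  simp only [Set.mem_setOf_eq, Pi.zero_apply] at hu
  by_contra hmem
  simp only [Set.mem_insert_iff, Set.mem_singleton_iff, not_or] at hmem
  obtain ⟨e0, e1, e2, e3⟩ := hmem
  have f1 := haar_pos_of_ne_zero e0 e1 (left_ne_zero_of_mul hu)
  have f2 := haar_pos_of_ne_zero (sub_ne_zero.mpr e2)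
    (fun hh => e3 (by linarith [sub_eq_iff_eq_add.mp hh])) (right_ne_zero_of_mul hu)
  have g1 : (-1:ℝ) < (d:ℝ) := by linarith [f1.1, f2.2]
  have g2 : (d:ℝ) < 1 := by linarith [f1.2, f2.1]
  have g1' : (-1:ℤ) < d := by exact_mod_cast g1
  have g2' : d < (1:ℤ) := by exact_mod_cast g2
  omega

lemma integral_comp_affine (Φ : ℝ → ℂ) (a b : ℝ) :
    ∫ x : ℝ, Φ (a * x + b) = |a⁻¹| • ∫ u, Φ u :=
  calc ∫ x : ℝ, Φ (a * x + b) = |a⁻¹| • ∫ y, Φ (y + b) :=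
        Measure.integral_comp_mul_left (fun y => Φ (y + b)) a
    _ = |a⁻¹| • ∫ u, Φ u := by rw [integral_add_right_eq_self (fun y => Φ y) b]

lemma haar_pair_same (a : ℝ) (ha : 0 < a) (k k' : ℤ) :
    ∫ x : ℝ, haarWavelet (a * x - k) * haarWavelet (a * x - k')
      = if k = k' then ((a⁻¹ : ℝ) : ℂ) else 0 := by
  have step1 : ∫ x : ℝ, haarWavelet (a * x - k) * haarWavelet (a * x - k')
      = |a⁻¹| • ∫ u : ℝ, haarWavelet (u - k) * haarWavelet (u - k') := by
    have h := integral_comp_affine (fun u => haarWavelet (u - k) * haarWavelet (u - k')) a 0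
    simp only [add_zero] at h
    exact h
  have step2 : ∫ u : ℝ, haarWavelet (u - k) * haarWavelet (u - k')
      = ∫ u : ℝ, haarWavelet u * haarWavelet (u - ((k':ℝ) - (k:ℝ))) := by
    rw [← integral_add_right_eq_self
      (fun u => haarWavelet u * haarWavelet (u - ((k':ℝ) - (k:ℝ)))) (-(k:ℝ))]
    congr 1
    funext x
    have e1 : x - (k:ℝ) = x + -(k:ℝ) := by ring
    have e2 : x - (k':ℝ) = x + -(k:ℝ) - ((k':ℝ) - (k:ℝ)) := by ring
    rw [e1, e2]
  by_cases hk : k = k'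
  · subst hk
    rw [if_pos rfl, step1, step2]
    simp only [sub_self, sub_zero]
    rw [haar_sq, abs_of_pos (inv_pos.mpr ha)]
    simp [Complex.real_smul]
  · rw [if_neg hk, step1, step2]
    have e : ((k':ℝ) - (k:ℝ)) = (((k' - k : ℤ)):ℝ) := by push_cast; ring
    rw [e, haar_mul_shift (k' - k) (sub_ne_zero.mpr (Ne.symm hk)), smul_zero]

lemma haar_scale (a c : ℝ) (ha : 0 < a)
    (h1 : c ≤ 0 ∨ 1 ≤ c) (h2 : c + a/2 ≤ 0 ∨ 1 ≤ c + a/2) (h3 : c + a ≤ 0 ∨ 1 ≤ c + a) :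
    ∫ u : ℝ, haarWavelet (a * u + c) * haarWavelet u = 0 := by
  have hcong : (fun u => haarWavelet (a * u + c) * haarWavelet u) =ᵐ[volume]
      fun u => (fun v => haarWavelet v * (Set.Ioc c (c + a/2)).indicator (fun _ => (1:ℂ)) v
          - haarWavelet v * (Set.Ioc (c + a/2) (c + a)).indicator (fun _ => (1:ℂ)) v)
        (a * u + c) := by
    filter_upwards [haar_ae] with u hu
    rw [hu, mul_sub]
    congr 1
    · congr 1
      by_cases hm : u ∈ Set.Ioc (0:ℝ) (1/2)
      · rw [Set.indicator_of_mem hm, Set.indicator_of_mem]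
        rw [Set.mem_Ioc] at hm ⊢
        constructor
        · nlinarith [hm.1]
        · nlinarith [hm.2]
      · rw [Set.indicator_of_notMem hm, Set.indicator_of_notMem]
        intro hc
        apply hm
        rw [Set.mem_Ioc] at hc ⊢
        constructor
        · nlinarith [hc.1]
        · nlinarith [hc.2]
    · congr 1
      by_cases hm : u ∈ Set.Ioc (1/2:ℝ) 1
      · rw [Set.indicator_of_mem hm, Set.indicator_of_mem]
        rw [Set.mem_Ioc] at hm ⊢
        constructor
        · nlinarith [hm.1]
        · nlinarith [hm.2]
      · rw [Set.indicator_of_notMem hm, Set.indicator_of_notMem]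
        intro hc
        apply hm
        rw [Set.mem_Ioc] at hc ⊢
        constructor
        · nlinarith [hc.1]
        · nlinarith [hc.2]
  rw [integral_congr_ae hcong]
  calc ∫ u : ℝ, (fun v => haarWavelet v * (Set.Ioc c (c + a/2)).indicator (fun _ => (1:ℂ)) v
          - haarWavelet v * (Set.Ioc (c + a/2) (c + a)).indicator (fun _ => (1:ℂ)) v)
        (a * u + c)
      = |a⁻¹| • ∫ v : ℝ, (haarWavelet v * (Set.Ioc c (c + a/2)).indicator (fun _ => (1:ℂ)) v
          - haarWavelet v * (Set.Ioc (c + a/2) (c + a)).indicator (fun _ => (1:ℂ)) v) :=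
        by exact integral_comp_affine (fun v =>
            haarWavelet v * (Set.Ioc c (c + a/2)).indicator (fun _ => (1:ℂ)) v
              - haarWavelet v * (Set.Ioc (c + a/2) (c + a)).indicator (fun _ => (1:ℂ)) v) a c
    _ = 0 := by
        rw [integral_sub (integrable_haar_ind _ _) (integrable_haar_ind _ _),
          haar_int_Ioc _ _ h1 h2, haar_int_Ioc _ _ h2 h3, sub_self, smul_zero]

lemma haar_pair_diff {j j' : ℤ} (h : j' < j) (k k' : ℤ) :
    ∫ x : ℝ, haarWavelet ((2:ℝ)^j * x - (k:ℝ)) * haarWavelet ((2:ℝ)^j' * x - (k':ℝ)) = 0 := by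
  set a : ℝ := (2:ℝ)^(j - j') with hadef
  have ha0 : 0 < a := zpow_pos (by norm_num) _
  set N : ℤ := 2^(j - j').toNat with hNdef
  set N2 : ℤ := 2^(j - j' - 1).toNat with hN2def
  have hN : ((N:ℤ) : ℝ) = a := by
    rw [hNdef, hadef]
    push_cast
    rw [← zpow_natCast (2:ℝ)]
    congr 1
    omega
  have hN2 : ((N2:ℤ) : ℝ) = a / 2 := by
    rw [hN2def, hadef, eq_div_iff (two_ne_zero : (2:ℝ) ≠ 0)]
    push_cast
    rw [← zpow_natCast (2:ℝ), ← zpow_add_one₀ (two_ne_zero : (2:ℝ) ≠ 0)]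
    congr 1
    omega
  have dichot : ∀ n : ℤ, (n:ℝ) ≤ 0 ∨ 1 ≤ (n:ℝ) := by
    intro n
    rcases le_or_gt n 0 with hn | hn
    · left; exact_mod_cast hn
    · right; exact_mod_cast hn
  have key : ∀ x : ℝ, haarWavelet ((2:ℝ)^j * x - (k:ℝ)) * haarWavelet ((2:ℝ)^j' * x - (k':ℝ))
      = (fun u => haarWavelet (a * u + (a * k' - k)) * haarWavelet u)
          ((2:ℝ)^j' * x + -(k':ℝ)) := by
    intro x
    beta_reduce
    have haa : a * (2:ℝ)^j' = (2:ℝ)^j := by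
      rw [hadef, ← zpow_add₀ (two_ne_zero : (2:ℝ) ≠ 0)]
      congr 1
      omega
    have e1 : a * ((2:ℝ)^j' * x + -(k':ℝ)) + (a * (k':ℝ) - (k:ℝ)) = (2:ℝ)^j * x - (k:ℝ) := by
      linear_combination x * haa
    have e2 : (2:ℝ)^j' * x + -(k':ℝ) = (2:ℝ)^j' * x - (k':ℝ) := by ring
    rw [e1, e2]
  have hsub := integral_comp_affine
    (fun u => haarWavelet (a * u + (a * (k':ℝ) - (k:ℝ))) * haarWavelet u) ((2:ℝ)^j') (-(k':ℝ))
  rw [integral_congr_ae (Filter.Eventually.of_forall key), hsub]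
  have e1 : a * (k':ℝ) - (k:ℝ) = ((N * k' - k : ℤ) : ℝ) := by push_cast [hN]; ring
  have e2 : (a * (k':ℝ) - (k:ℝ)) + a / 2 = ((N * k' - k + N2 : ℤ) : ℝ) := by
    push_cast [hN, hN2]; ring
  have e3 : (a * (k':ℝ) - (k:ℝ)) + a = ((N * k' - k + N : ℤ) : ℝ) := by
    push_cast [hN]; ring
  rw [haar_scale a (a * k' - k) ha0 (e1 ▸ dichot _) (e2 ▸ dichot _) (e3 ▸ dichot _), smul_zero]

def cexpI (r : ℝ) : ℂ := Complex.exp ((r : ℂ) * Complex.I)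

lemma cexpI_add (r s : ℝ) : cexpI r * cexpI s = cexpI (r + s) := by
  unfold cexpI
  rw [← Complex.exp_add, Complex.ofReal_add, add_mul]

lemma cexpI_conj (r : ℝ) : (starRingEnd ℂ) (cexpI r) = cexpI (-r) := by
  unfold cexpI
  rw [← Complex.exp_conj, map_mul, Complex.conj_ofReal, Complex.conj_I]
  congr 1
  push_cast
  ring

lemma cexpI_zero : cexpI 0 = 1 := by simp [cexpI]

lemma integrand_eq (A A' lam lam' : ℝ) (h1 : lam * (A * A) = 1) (h2 : lam' * (A' * A') = 1)
    (k l k' l' : ℤ) (x y : ℝ) :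
    ((A:ℂ) * (cexpI (Real.pi * lam * ((A*x) * l - (A*y) * k)) *
        (cexpI (Real.pi * (A*x - k) * (A*y - l) * lam) *
          haarWavelet (A*x - k) * haarWavelet (A*y - l)))) *
      (starRingEnd ℂ) ((A':ℂ) * (cexpI (Real.pi * lam' * ((A'*x) * l' - (A'*y) * k')) *
        (cexpI (Real.pi * (A'*x - k') * (A'*y - l') * lam') *
          haarWavelet (A'*x - k') * haarWavelet (A'*y - l')))) =
    (((A * A' : ℝ):ℂ) * cexpI (Real.pi * (lam * k * l - lam' * k' * l'))) *
      ((haarWavelet (A*x - k) * haarWavelet (A'*x - k')) *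
        (cexpI (2 * Real.pi * (lam' * A' * k' - lam * A * k) * y) *
          (haarWavelet (A*y - l) * haarWavelet (A'*y - l')))) := by
  simp only [map_mul, Complex.conj_ofReal, haar_conj, cexpI_conj]
  trans ((A:ℂ) * (A':ℂ) *
      ((cexpI (Real.pi * lam * ((A*x) * l - (A*y) * k)) *
          cexpI (Real.pi * (A*x - k) * (A*y - l) * lam)) *
        (cexpI (-(Real.pi * lam' * ((A'*x) * l' - (A'*y) * k'))) *
          cexpI (-(Real.pi * (A'*x - k') * (A'*y - l') * lam')))) *
      (haarWavelet (A*x - k) * haarWavelet (A'*x - k') *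
        (haarWavelet (A*y - l) * haarWavelet (A'*y - l'))))
  · ring
  rw [cexpI_add, cexpI_add, cexpI_add]
  rw [show (Real.pi * lam * ((A*x) * (l:ℝ) - (A*y) * (k:ℝ)) +
        Real.pi * (A*x - (k:ℝ)) * (A*y - (l:ℝ)) * lam) +
      (-(Real.pi * lam' * ((A'*x) * (l':ℝ) - (A'*y) * (k':ℝ))) +
        -(Real.pi * (A'*x - (k':ℝ)) * (A'*y - (l':ℝ)) * lam'))
      = Real.pi * (lam * (k:ℝ) * (l:ℝ) - lam' * (k':ℝ) * (l':ℝ)) +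
        2 * Real.pi * (lam' * A' * (k':ℝ) - lam * A * (k:ℝ)) * y from by
    linear_combination (Real.pi * x * y) * h1 - (Real.pi * x * y) * h2]
  rw [← cexpI_add, Complex.ofReal_mul]
  ring


/-- The family `{D_{2^j} (T^t_{(k,l)})^{2^{-2j}} ψ_j : k, l, j ∈ ℤ}` is an
orthonormal system in `L²(ℝ²)`. -/
theorem statement_2 (j k l j' k' l' : ℤ) :
    (∫ p : ℝ × ℝ,
        dilate ((2 : ℝ) ^ j) (twistedTranslate ((2 : ℝ) ^ (-(2 * j))) k l (psiHaar j)) p *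
          (starRingEnd ℂ)
            (dilate ((2 : ℝ) ^ j') (twistedTranslate ((2 : ℝ) ^ (-(2 * j'))) k' l'
              (psiHaar j')) p))
      = if (j, k, l) = (j', k', l') then 1 else 0 := by
  have two_ne : (2:ℝ) ≠ 0 := two_ne_zero
  have hA : (0:ℝ) < (2:ℝ)^j := zpow_pos (by norm_num) _
  have hA' : (0:ℝ) < (2:ℝ)^j' := zpow_pos (by norm_num) _
  have hL1 : (2:ℝ)^(-(2*j)) * ((2:ℝ)^j * (2:ℝ)^j) = 1 := by
    rw [← zpow_add₀ two_ne, ← zpow_add₀ two_ne, show -(2*j) + (j + j) = 0 by ring, zpow_zero]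
  have hL1' : (2:ℝ)^(-(2*j')) * ((2:ℝ)^j' * (2:ℝ)^j') = 1 := by
    rw [← zpow_add₀ two_ne, ← zpow_add₀ two_ne, show -(2*j') + (j' + j') = 0 by ring, zpow_zero]
  have key : (fun p : ℝ × ℝ =>
      dilate ((2 : ℝ) ^ j) (twistedTranslate ((2 : ℝ) ^ (-(2 * j))) k l (psiHaar j)) p *
        (starRingEnd ℂ)
          (dilate ((2 : ℝ) ^ j') (twistedTranslate ((2 : ℝ) ^ (-(2 * j'))) k' l'
            (psiHaar j')) p))
      =ᵐ[volume] (fun p : ℝ × ℝ =>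
        ((((2:ℝ)^j * (2:ℝ)^j' : ℝ):ℂ) *
          cexpI (Real.pi * ((2:ℝ)^(-(2*j)) * k * l - (2:ℝ)^(-(2*j')) * k' * l'))) *
        ((fun x => haarWavelet ((2:ℝ)^j * x - (k:ℝ)) * haarWavelet ((2:ℝ)^j' * x - (k':ℝ))) p.1 *
         (fun y => cexpI (2 * Real.pi *
              ((2:ℝ)^(-(2*j')) * (2:ℝ)^j' * k' - (2:ℝ)^(-(2*j)) * (2:ℝ)^j * k) * y) *
            (haarWavelet ((2:ℝ)^j * y - (l:ℝ)) * haarWavelet ((2:ℝ)^j' * y - (l':ℝ)))) p.2)) :=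
    Filter.Eventually.of_forall fun p =>
      integrand_eq ((2:ℝ)^j) ((2:ℝ)^j') ((2:ℝ)^(-(2*j))) ((2:ℝ)^(-(2*j')))
        hL1 hL1' k l k' l' p.1 p.2
  have hprod := integral_prod_mul (μ := (volume : Measure ℝ)) (ν := (volume : Measure ℝ))
    (fun x => haarWavelet ((2:ℝ)^j * x - (k:ℝ)) * haarWavelet ((2:ℝ)^j' * x - (k':ℝ)))
    (fun y => cexpI (2 * Real.pi *
        ((2:ℝ)^(-(2*j')) * (2:ℝ)^j' * k' - (2:ℝ)^(-(2*j)) * (2:ℝ)^j * k) * y) *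
      (haarWavelet ((2:ℝ)^j * y - (l:ℝ)) * haarWavelet ((2:ℝ)^j' * y - (l':ℝ))))
  rw [integral_congr_ae key, integral_const_mul, Measure.volume_eq_prod, hprod]
  by_cases hj : j = j'
  · subst hj
    by_cases hk : k = k'
    · subst hk
      simp only [sub_self, mul_zero, zero_mul, cexpI_zero, one_mul]
      by_cases hl : l = l'
      · subst hl
        rw [if_pos rfl, haar_pair_same _ hA k k, if_pos rfl,
          haar_pair_same _ hA l l, if_pos rfl]
        simp only [sub_self, mul_zero, cexpI_zero, mul_one]
        have h2 : ((2:ℂ))^j ≠ 0 := zpow_ne_zero _ (by norm_num)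
        push_cast
        field_simp
      · rw [if_neg (by simp [hl]), haar_pair_same _ hA l l', if_neg hl]
        simp
    · rw [if_neg (by simp [hk]), haar_pair_same _ hA k k', if_neg hk]
      simp
  · rw [if_neg (by simp [hj])]
    rcases lt_or_gt_of_ne hj with h | h
    · have hswap : (fun x : ℝ => haarWavelet ((2:ℝ)^j * x - (k:ℝ)) *
          haarWavelet ((2:ℝ)^j' * x - (k':ℝ)))
          =ᵐ[volume] (fun x : ℝ => haarWavelet ((2:ℝ)^j' * x - (k':ℝ)) *
            haarWavelet ((2:ℝ)^j * x - (k:ℝ))) :=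
        Filter.Eventually.of_forall fun x => mul_comm _ _
      rw [integral_congr_ae hswap, haar_pair_diff h k' k]
      simp
    · rw [haar_pair_diff h k k']
      simp
end
end

section
/- Let ψ ∈ L²(ℝ²), let j ≥ 0 be an integer, and let k, l, k', l' ∈ ℤ. Then T^t_{(k',l')} D_{2^j} (T^t_{(k,l)})^{2^{-2j}} ψ = e^{-πi 2^{-2j} (2^j k' l − 2^j l' k)} D_{2^j} (T^t_{(2^j k' + k, 2^j l' + l)})^{2^{-2j}} ψ in L²(ℝ²). -/
open MeasureTheory Complex

noncomputable section

/-- For `ψ ∈ L²(ℝ²)`, `j ≥ 0` and `k, l, k', l' ∈ ℤ`,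
`T^t_{(k',l')} D_{2^j} (T^t_{(k,l)})^{2^{-2j}} ψ
  = e^{-πi2^{-2j}(2^j k' l - 2^j l' k)} D_{2^j} (T^t_{(2^j k' + k, 2^j l' + l)})^{2^{-2j}} ψ`. -/
theorem statement_5 (ψ : ℝ × ℝ → ℂ) (hψ : MemLp ψ 2 (volume : Measure (ℝ × ℝ)))
    (j : ℕ) (k l k' l' : ℤ) :
    twistedTranslate 1 k' l'
        (dilate ((2 : ℝ) ^ j) (twistedTranslate ((2 : ℝ) ^ (-(2 * (j : ℤ)))) k l ψ)) =
      fun p =>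
        Complex.exp (-(↑(Real.pi * (2 : ℝ) ^ (-(2 * (j : ℤ))) *
            ((2 : ℝ) ^ (j : ℕ) * k' * l - (2 : ℝ) ^ (j : ℕ) * l' * k)) : ℂ) * Complex.I) *
          dilate ((2 : ℝ) ^ j)
            (twistedTranslate ((2 : ℝ) ^ (-(2 * (j : ℤ)))) (2 ^ j * k' + k) (2 ^ j * l' + l) ψ)
            p := by
  funext p
  obtain ⟨x, y⟩ := p
  simp only [twistedTranslate, dilate]
  have key : (2:ℝ) ^ (-(2 * (j:ℤ))) * ((2:ℝ)^j * (2:ℝ)^j) = 1 := by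
    rw [show (-(2 * (j:ℤ))) = -(((2*j : ℕ) : ℤ)) by push_cast; ring, zpow_neg, zpow_natCast,
      two_mul, pow_add]
    have h : (0:ℝ) < (2:ℝ)^j := by positivity
    field_simp
  have harg : ((2:ℝ)^j * (x - ↑k') - ↑k, (2:ℝ)^j * (y - ↑l') - ↑l)
      = ((2:ℝ)^j * x - ((2^j * k' + k : ℤ) : ℝ), (2:ℝ)^j * y - ((2^j * l' + l : ℤ) : ℝ)) := by
    simp only [Prod.mk.injEq]
    push_cast
    constructor <;> ring
  rw [harg]
  have hre : Real.pi * 1 * (x * ↑l' - y * ↑k') +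
      Real.pi * (2:ℝ) ^ (-(2 * (j:ℤ))) *
        ((2:ℝ) ^ j * (x - ↑k') * ↑l - (2:ℝ) ^ j * (y - ↑l') * ↑k) =
      -(Real.pi * (2:ℝ) ^ (-(2 * (j:ℤ))) * ((2:ℝ) ^ j * ↑k' * ↑l - (2:ℝ) ^ j * ↑l' * ↑k)) +
      Real.pi * (2:ℝ) ^ (-(2 * (j:ℤ))) *
        ((2:ℝ) ^ j * x * ((2 ^ j * l' + l : ℤ) : ℝ) -
          (2:ℝ) ^ j * y * ((2 ^ j * k' + k : ℤ) : ℝ)) := by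
    push_cast
    linear_combination (-(Real.pi * (x * ↑l' - y * ↑k'))) * key
  have hexp :
      Complex.exp ((↑(Real.pi * 1 * (x * ↑l' - y * ↑k')) : ℂ) * Complex.I) *
        Complex.exp ((↑(Real.pi * (2:ℝ) ^ (-(2 * (j:ℤ))) *
          ((2:ℝ) ^ j * (x - ↑k') * ↑l - (2:ℝ) ^ j * (y - ↑l') * ↑k)) : ℂ) * Complex.I) =
      Complex.exp (-(↑(Real.pi * (2:ℝ) ^ (-(2 * (j:ℤ))) *
          ((2:ℝ) ^ j * ↑k' * ↑l - (2:ℝ) ^ j * ↑l' * ↑k)) : ℂ) * Complex.I) *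
        Complex.exp ((↑(Real.pi * (2:ℝ) ^ (-(2 * (j:ℤ))) *
          ((2:ℝ) ^ j * x * ((2 ^ j * l' + l : ℤ) : ℝ) -
            (2:ℝ) ^ j * y * ((2 ^ j * k' + k : ℤ) : ℝ))) : ℂ) * Complex.I) := by
    rw [← Complex.exp_add, ← Complex.exp_add, ← Complex.ofReal_neg, ← add_mul, ← add_mul,
      ← Complex.ofReal_add, ← Complex.ofReal_add, hre]
  have hmul : ∀ A B c Ψ : ℂ, A * (c * (B * Ψ)) = A * B * (c * Ψ) := fun _ _ _ _ => by ring
  rw [hmul, hmul, hexp]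
end
end

section
/- Let ψ ∈ L¹(ℝ²) ∩ L²(ℝ²), let j ≥ 0 be an integer, and let k, l ∈ ℤ. Then for a.e. η ∈ ℝ, ∫_ℝ |K_{D_{2^j} (T^t_{(k,l)})^{2^{-2j}} ψ}(ξ, η)|² dξ = ∫_ℝ |K^{2^{-2j}}_ψ(2^j ξ + l, 2^j η)|² dξ = 2^{-j} ∫_ℝ |K^{2^{-2j}}_ψ(ξ, 2^j η)|² dξ. -/
open MeasureTheory Complex

set_option maxHeartbeats 800000

noncomputable section

/-- Pointwise: the kernel of the dilated twisted translate has the same absolute value as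
the `λ`-kernel of `ψ` at rescaled/shifted arguments. -/
lemma statement_11_aux1 (ψ : ℝ × ℝ → ℂ) (k l : ℤ) (a lam η ξ : ℝ) (ha0 : 0 < a)
    (hla : lam * a ^ 2 = 1) :
    ‖weylKernel 1 (dilate a (twistedTranslate lam k l ψ)) ξ η‖
      = ‖weylKernel lam ψ (a * ξ + l) (a * η)‖ := by
  set c : ℂ := Complex.exp ((↑(Real.pi * lam * (k * l + 2 * a * ξ * k)) : ℂ) * Complex.I)
    with hc
  set F : ℝ → ℂ := fun u =>
    ψ (u, a * (η - ξ) - l) *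
      Complex.exp ((↑(Real.pi * lam * u * (a * η + (a * ξ + l))) : ℂ) * Complex.I) with hF
  have hRHS : weylKernel lam ψ (a * ξ + l) (a * η) = ∫ u, F u := by
    unfold weylKernel
    refine congrArg (integral volume) (funext fun x => ?_)
    rw [hF]
    simp only
    have hco : a * η - (a * ξ + (l:ℝ)) = a * (η - ξ) - l := by ring
    rw [hco]
  have hLHS : weylKernel 1 (dilate a (twistedTranslate lam k l ψ)) ξ η
      = c * ∫ u, F u := by
    unfold weylKernel dilate twistedTranslate
    have hpt : ∀ x : ℝ,
        ((a : ℂ) * (Complex.exp ((↑(Real.pi * lam * ((a * x) * l - (a * (η - ξ)) * k)) : ℂ)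
            * Complex.I) * ψ (a * x - k, a * (η - ξ) - l))) *
          Complex.exp ((↑(Real.pi * 1 * x * (η + ξ)) : ℂ) * Complex.I)
        = (a : ℂ) * (c * F (a * x - k)) := by
      intro x
      rw [hF, hc]
      simp only
      have hexp : Complex.exp ((↑(Real.pi * lam * ((a * x) * l - (a * (η - ξ)) * k)) : ℂ)
            * Complex.I) * Complex.exp ((↑(Real.pi * 1 * x * (η + ξ)) : ℂ) * Complex.I)
          = Complex.exp ((↑(Real.pi * lam * (k * l + 2 * a * ξ * k)) : ℂ) * Complex.I) *
            Complex.exp ((↑(Real.pi * lam * (a * x - k) * (a * η + (a * ξ + l))) : ℂ)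
              * Complex.I) := by
        rw [← Complex.exp_add, ← Complex.exp_add, ← add_mul, ← add_mul,
          ← Complex.ofReal_add, ← Complex.ofReal_add]
        congr 2
        rw [Complex.ofReal_inj]
        linear_combination (-(Real.pi * x * (η + ξ))) * hla
      linear_combination ((a : ℂ) * ψ (a * x - k, a * (η - ξ) - l)) * hexp
    have hh := congrArg (integral volume) (funext hpt)
    rw [hh, integral_const_mul, integral_const_mul]
    have h2 : (∫ x : ℝ, F (a * x - k)) = |a⁻¹| • ∫ u, F u := by
      have e1 : (∫ x : ℝ, F (a * x - k)) = ∫ x : ℝ, (fun y => F (y - k)) (a * x) := rfl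
      rw [e1, Measure.integral_comp_mul_left (fun y => F (y - (k:ℝ))) a,
        integral_sub_right_eq_self F (k : ℝ)]
    rw [h2, Complex.real_smul]
    rw [abs_of_pos (by positivity : (0:ℝ) < a⁻¹)]
    rw [show (a : ℂ) * (c * ((a⁻¹ : ℝ) * ∫ u, F u)) = ((a * a⁻¹ : ℝ) : ℂ) * (c * ∫ u, F u)
      from by push_cast; ring, mul_inv_cancel₀ ha0.ne']
    simp
  rw [hLHS, hRHS, norm_mul]
  have hnc : ‖c‖ = 1 := by
    rw [hc, Complex.norm_exp]
    simp
  rw [hnc, one_mul]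

/-- Change of variables `ξ ↦ aξ + l` in the integral of the squared kernel. -/
lemma statement_11_aux2 (ψ : ℝ × ℝ → ℂ) (j : ℕ) (l : ℤ) (a lam η : ℝ)
    (hinv : |a⁻¹| = (2:ℝ) ^ (-(j:ℤ))) :
    (∫ ξ : ℝ, ‖weylKernel lam ψ (a * ξ + l) (a * η)‖ ^ 2)
      = (2 : ℝ) ^ (-(j : ℤ)) * ∫ ξ : ℝ, ‖weylKernel lam ψ ξ (a * η)‖ ^ 2 := by
  have h1 : (∫ ξ : ℝ, ‖weylKernel lam ψ (a * ξ + l) (a * η)‖ ^ 2)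
      = |a⁻¹| • ∫ y : ℝ, ‖weylKernel lam ψ (y + l) (a * η)‖ ^ 2 :=
    Measure.integral_comp_mul_left (fun y => ‖weylKernel lam ψ (y + l) (a * η)‖ ^ 2) a
  have h2 : (∫ y : ℝ, ‖weylKernel lam ψ (y + l) (a * η)‖ ^ 2)
      = ∫ ξ : ℝ, ‖weylKernel lam ψ ξ (a * η)‖ ^ 2 :=
    integral_add_right_eq_self (fun y => ‖weylKernel lam ψ y (a * η)‖ ^ 2) (l : ℝ)
  rw [h1, h2, hinv, smul_eq_mul]

/-- For `ψ ∈ L¹(ℝ²) ∩ L²(ℝ²)`, `j ≥ 0` and `k, l ∈ ℤ`, for a.e. `η ∈ ℝ`,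
`∫_ℝ |K_{D_{2^j} (T^t_{(k,l)})^{2^{-2j}} ψ}(ξ, η)|² dξ = ∫_ℝ |K^{2^{-2j}}_ψ(2^j ξ + l, 2^j η)|² dξ
  = 2^{-j} ∫_ℝ |K^{2^{-2j}}_ψ(ξ, 2^j η)|² dξ`. -/
theorem statement_11 (ψ : ℝ × ℝ → ℂ) (hψ1 : Integrable ψ (volume : Measure (ℝ × ℝ)))
    (hψ2 : MemLp ψ 2 (volume : Measure (ℝ × ℝ))) (j : ℕ) (k l : ℤ) :
    ∀ᵐ η : ℝ,
      (∫ ξ : ℝ, ‖weylKernel 1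
          (dilate ((2 : ℝ) ^ j) (twistedTranslate ((2 : ℝ) ^ (-(2 * (j : ℤ)))) k l ψ)) ξ η‖ ^ 2)
        = (∫ ξ : ℝ, ‖weylKernel ((2 : ℝ) ^ (-(2 * (j : ℤ)))) ψ
            ((2 : ℝ) ^ j * ξ + l) ((2 : ℝ) ^ j * η)‖ ^ 2) ∧
      (∫ ξ : ℝ, ‖weylKernel ((2 : ℝ) ^ (-(2 * (j : ℤ)))) ψ
          ((2 : ℝ) ^ j * ξ + l) ((2 : ℝ) ^ j * η)‖ ^ 2)
        = (2 : ℝ) ^ (-(j : ℤ)) *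
            ∫ ξ : ℝ, ‖weylKernel ((2 : ℝ) ^ (-(2 * (j : ℤ)))) ψ ξ ((2 : ℝ) ^ j * η)‖ ^ 2 := by
  have ha0 : (0:ℝ) < (2:ℝ) ^ j := by positivity
  have hla : (2:ℝ) ^ (-(2 * (j : ℤ))) * ((2:ℝ) ^ j) ^ 2 = 1 := by
    rw [← pow_mul, ← zpow_natCast (2:ℝ) (j * 2), ← zpow_add₀ (two_ne_zero : (2:ℝ) ≠ 0)]
    norm_num [mul_comm]
  have hinv : |((2:ℝ) ^ j)⁻¹| = (2:ℝ) ^ (-(j:ℤ)) := by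
    rw [abs_of_pos (by positivity), ← zpow_natCast (2:ℝ) j, ← zpow_neg]
  refine Filter.Eventually.of_forall fun η =>
    ⟨?_, statement_11_aux2 ψ j l _ _ η hinv⟩
  exact congrArg (integral volume) (funext fun ξ =>
    congrArg (fun t : ℝ => t ^ 2) (statement_11_aux1 ψ k l _ _ η ξ ha0 hla))
end
end

section
/- Let φ ∈ L¹(ℝ²) ∩ L²(ℝ²), let λ ∈ ℝ∖{0}, let j ∈ ℤ, and let k, l ∈ ℤ. Then the kernel of the Weyl transform of the dilated twisted translate satisfies K^λ_{D_{2^j} (T^t_{(2k,l)})^{λ 2^{-2j}} φ}(ξ, η) = e^{2πi λ 2^{-2j} k (2^{j+1} ξ + l)} K^{λ 2^{-2j}}_φ(2^j ξ + l, 2^j η) for all ξ, η ∈ ℝ. -/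
open MeasureTheory Complex

noncomputable section

private lemma exp_shuffle (A B E F : ℝ) (h : A + B = E + F) (z : ℂ) :
    Complex.exp ((A : ℂ) * Complex.I) * z * Complex.exp ((B : ℂ) * Complex.I)
      = Complex.exp ((E : ℂ) * Complex.I) * (z * Complex.exp ((F : ℂ) * Complex.I)) := by
  have key : ∀ X Y : ℝ, Complex.exp ((X : ℂ) * Complex.I) * Complex.exp ((Y : ℂ) * Complex.I)
      = Complex.exp ((((X + Y : ℝ)) : ℂ) * Complex.I) := fun X Y => by
    rw [← Complex.exp_add, Complex.ofReal_add, add_mul]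
  calc Complex.exp ((A : ℂ) * Complex.I) * z * Complex.exp ((B : ℂ) * Complex.I)
      = (Complex.exp ((A : ℂ) * Complex.I) * Complex.exp ((B : ℂ) * Complex.I)) * z := by ring
    _ = Complex.exp ((((A + B : ℝ)) : ℂ) * Complex.I) * z := by rw [key]
    _ = Complex.exp ((((E + F : ℝ)) : ℂ) * Complex.I) * z := by rw [h]
    _ = (Complex.exp ((E : ℂ) * Complex.I) * Complex.exp ((F : ℂ) * Complex.I)) * z := by rw [key]
    _ = _ := by ring

/-- For `φ ∈ L¹(ℝ²) ∩ L²(ℝ²)`, `λ ≠ 0`, `j ∈ ℤ` and `k, l ∈ ℤ`,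
`K^λ_{D_{2^j} (T^t_{(2k,l)})^{λ2^{-2j}} φ}(ξ, η)
  = e^{2πiλ2^{-2j}k(2^{j+1}ξ + l)} K^{λ2^{-2j}}_φ(2^j ξ + l, 2^j η)` for all `ξ, η ∈ ℝ`. -/
theorem statement_14 (φ : ℝ × ℝ → ℂ) (hφ1 : Integrable φ (volume : Measure (ℝ × ℝ)))
    (hφ2 : MemLp φ 2 (volume : Measure (ℝ × ℝ))) (lam : ℝ) (hlam : lam ≠ 0) (j k l : ℤ)
    (ξ η : ℝ) :
    weylKernel lam (dilate ((2 : ℝ) ^ j)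
        (twistedTranslate (lam * (2 : ℝ) ^ (-(2 * j))) (2 * k) l φ)) ξ η =
      Complex.exp ((↑(2 * Real.pi * lam * (2 : ℝ) ^ (-(2 * j)) * (k : ℝ) *
          ((2 : ℝ) ^ (j + 1) * ξ + l)) : ℂ) * Complex.I) *
        weylKernel (lam * (2 : ℝ) ^ (-(2 * j))) φ ((2 : ℝ) ^ j * ξ + l) ((2 : ℝ) ^ j * η) := by
  have h2 : (2 : ℝ) ≠ 0 := two_ne_zero
  set a : ℝ := (2 : ℝ) ^ j with ha
  have ha0 : (0 : ℝ) < a := by rw [ha]; positivity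
  set μ : ℝ := lam * (2 : ℝ) ^ (-(2 * j)) with hμ
  have hμa : μ * (a * a) = lam := by
    rw [hμ, ha, ← zpow_add₀ h2 j j, mul_assoc, ← zpow_add₀ h2]
    rw [show -(2 * j) + (j + j) = 0 from by ring, zpow_zero, mul_one]
  have ha2 : (2 : ℝ) ^ (j + 1) = a * 2 := by
    rw [ha, zpow_add₀ h2, zpow_one]
  set c : ℝ := ((2 * k : ℤ) : ℝ) with hc
  set H : ℝ → ℂ := fun u =>
    Complex.exp ((↑(Real.pi * μ * (u * (l : ℝ) - (a * (η - ξ)) * c)) : ℂ) * Complex.I) *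
      φ (u - c, a * (η - ξ) - (l : ℝ)) *
      Complex.exp ((↑(Real.pi * μ * (a * (η + ξ)) * u) : ℂ) * Complex.I) with hH
  have step1 : weylKernel lam (dilate a (twistedTranslate μ (2 * k) l φ)) ξ η
      = ∫ x : ℝ, (a : ℂ) * H (a * x) := by
    unfold weylKernel
    congr 1
    funext x
    simp only [dilate, twistedTranslate, hH, ← hc]
    have key : Real.pi * lam * x * (η + ξ) = Real.pi * μ * (a * (η + ξ)) * (a * x) := by
      rw [← hμa]; ring
    rw [key]; ring
  have step2 : (∫ x : ℝ, (a : ℂ) * H (a * x)) = ∫ u : ℝ, H u := by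
    rw [integral_const_mul, MeasureTheory.Measure.integral_comp_mul_left H a,
      abs_of_pos (inv_pos.mpr ha0), Complex.real_smul, Complex.ofReal_inv,
      mul_inv_cancel_left₀ (Complex.ofReal_ne_zero.mpr ha0.ne')]
  have step3 : (∫ u : ℝ, H u) = ∫ u : ℝ, H (u + c) :=
    (MeasureTheory.integral_add_right_eq_self H c).symm
  have hpt : ∀ u : ℝ, H (u + c)
      = Complex.exp ((↑(2 * Real.pi * lam * (2 : ℝ) ^ (-(2 * j)) * (k : ℝ) *
          ((2 : ℝ) ^ (j + 1) * ξ + l)) : ℂ) * Complex.I) *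
        (φ (u, a * η - (a * ξ + (l : ℝ))) *
          Complex.exp ((↑(Real.pi * μ * u * (a * η + (a * ξ + (l : ℝ)))) : ℂ) * Complex.I)) := by
    intro u
    simp only [hH]
    rw [show (u + c - c : ℝ) = u from by ring,
      show a * (η - ξ) - (l : ℝ) = a * η - (a * ξ + (l : ℝ)) from by ring]
    apply exp_shuffle
    rw [hμ, hc, ha2]
    push_cast
    ring
  rw [step1, step2, step3]
  simp only [hpt]
  rw [integral_const_mul]
  rfl
end
end
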